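/- Let p > 1 and d ≥ 1 be fixed, and let G be the disjoint union of K_{D,d} and D disjoint cliques of size d+2, with V = full vertex set and V_1 = vertices of K_{D,d}. Then f_p(V) < d^{p−1} + D^{p−1} + (d+1)^p, and consequently lim_{D→∞} f_p(V)/f_p(V_1) ≤ 1/d. -/

import Mathlib

open Filter

/-- Induced degree: `d_v(S)` is the number of neighbors of `v` lying in `S`
if `v ∈ S`, and `0` otherwise. -/
noncomputable def indDeg {V : Type*} [DecidableEq V] (G : SimpleGraph V)
    (S : Finset V) (v : V) : ℕ :=
  if v ∈ S then Nat.card {u : V // u ∈ S ∧ G.Adj v u} else 0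

/-- `f_p(S) = (1/|S|) Σ_{v∈S} d_v(S)^p`. -/
noncomputable def fp {V : Type*} [DecidableEq V] (G : SimpleGraph V)
    (p : ℝ) (S : Finset V) : ℝ :=
  (1 / (S.card : ℝ)) * ∑ v ∈ S, (indDeg G S v : ℝ) ^ p

/-- Disjoint union of the complete bipartite graph `K_{D,d}` and
`D` disjoint cliques, each of size `d+2`. -/
def bipCliqueGraph (D d : ℕ) :
    SimpleGraph ((Fin D ⊕ Fin d) ⊕ (Fin D × Fin (d + 2))) :=
  completeBipartiteGraph (Fin D) (Fin d) ⊕g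
    SimpleGraph.fromRel (fun a b : Fin D × Fin (d + 2) => a.1 = b.1)

/-- The vertex set of the `K_{D,d}` part. -/
def V1 (D d : ℕ) : Finset ((Fin D ⊕ Fin d) ⊕ (Fin D × Fin (d + 2))) :=
  Finset.univ.filter (fun x => x.isLeft)

/-- The vertex set of the union of cliques. -/
def V2 (D d : ℕ) : Finset ((Fin D ⊕ Fin d) ⊕ (Fin D × Fin (d + 2))) :=
  Finset.univ.filter (fun x => x.isRight)

lemma indDeg_eq_card {V : Type*} [DecidableEq V] [Fintype V] (G : SimpleGraph V)
    (S : Finset V) (v : V) (hv : v ∈ S) [DecidablePred (fun u => G.Adj v u)] :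
    indDeg G S v = (S.filter (fun u => G.Adj v u)).card := by
  classical
  rw [indDeg, if_pos hv, Nat.card_eq_fintype_card, Fintype.card_subtype]
  congr 1
  ext u
  simp [and_comm]

lemma deg_ll (D d : ℕ) (i : Fin D) :
    indDeg (bipCliqueGraph D d) Finset.univ (Sum.inl (Sum.inl i)) = d := by
  classical
  rw [indDeg_eq_card _ _ _ (Finset.mem_univ _)]
  have : Finset.univ.filter (fun u => (bipCliqueGraph D d).Adj (Sum.inl (Sum.inl i)) u)
      = (Finset.univ : Finset (Fin d)).map ⟨fun j => Sum.inl (Sum.inr j), by intro a b h; simpa using h⟩ := by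
    ext u
    rcases u with (x | y) | ⟨k, m⟩ <;> simp [bipCliqueGraph, DFunLike.coe]
  rw [this]; simp

lemma deg_lr (D d : ℕ) (j : Fin d) :
    indDeg (bipCliqueGraph D d) Finset.univ (Sum.inl (Sum.inr j)) = D := by
  classical
  rw [indDeg_eq_card _ _ _ (Finset.mem_univ _)]
  have : Finset.univ.filter (fun u => (bipCliqueGraph D d).Adj (Sum.inl (Sum.inr j)) u)
      = (Finset.univ : Finset (Fin D)).map ⟨fun i => Sum.inl (Sum.inl i), by intro a b h; simpa using h⟩ := by
    ext u
    rcases u with (x | y) | ⟨k, m⟩ <;> simp [bipCliqueGraph, DFunLike.coe]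
  rw [this]; simp

lemma deg_r (D d : ℕ) (k : Fin D) (m : Fin (d+2)) :
    indDeg (bipCliqueGraph D d) Finset.univ (Sum.inr (k, m)) = d + 1 := by
  classical
  rw [indDeg_eq_card _ _ _ (Finset.mem_univ _)]
  have : Finset.univ.filter (fun u => (bipCliqueGraph D d).Adj (Sum.inr (k, m)) u)
      = ((Finset.univ : Finset (Fin (d+2))).erase m).map
          ⟨fun m' => Sum.inr (k, m'), by intro a b h; simpa using h⟩ := by
    ext u
    rcases u with (x | y) | ⟨k', m'⟩
    · simp [bipCliqueGraph]
    · simp [bipCliqueGraph]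
    · simp only [bipCliqueGraph, SimpleGraph.sum_adj, SimpleGraph.fromRel_adj,
        Finset.mem_filter, Finset.mem_univ, true_and, Finset.mem_map,
        Function.Embedding.coeFn_mk, Finset.mem_erase, Sum.inr.injEq, Prod.mk.injEq, ne_eq,
        Prod.ext_iff, not_and]
      constructor
      · rintro ⟨h1, h2⟩
        have hk : k = k' := by tauto
        subst hk
        refine ⟨m', ⟨?_, trivial⟩, rfl⟩
        intro hm; subst hm; exact h1 rfl rfl
      · rintro ⟨m'', ⟨hm, -⟩, hk⟩
        cases hk
        exact ⟨fun _ h => hm h.symm, Or.inl rfl⟩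
  rw [this]
  simp [Finset.card_erase_of_mem]

lemma mem_V1 (D d : ℕ) (x : Fin D ⊕ Fin d) : Sum.inl x ∈ V1 D d := by simp [V1]

lemma indDeg_V1_eq (D d : ℕ) (x : Fin D ⊕ Fin d) :
    indDeg (bipCliqueGraph D d) (V1 D d) (Sum.inl x)
      = indDeg (bipCliqueGraph D d) Finset.univ (Sum.inl x) := by
  classical
  rw [indDeg_eq_card _ _ _ (mem_V1 D d x), indDeg_eq_card _ _ _ (Finset.mem_univ _)]
  congr 1
  ext u
  rcases u with u | u
  · simp [V1]
  · rcases x with x | x <;> simp [V1, bipCliqueGraph]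

lemma V1_eq (D d : ℕ) : V1 D d =
    (Finset.univ : Finset (Fin D ⊕ Fin d)).map ⟨Sum.inl, Sum.inl_injective⟩ := by
  ext u; rcases u with u | u <;> simp [V1]

lemma fp_univ (D d : ℕ) (p : ℝ) :
    fp (bipCliqueGraph D d) p Finset.univ =
      ((D : ℝ) * (d:ℝ)^p + (d : ℝ) * (D:ℝ)^p + ((D:ℝ)*((d:ℝ)+2)) * ((d:ℝ)+1)^p)
        / ((D:ℝ) + (d:ℝ) + (D:ℝ)*((d:ℝ)+2)) := by
  rw [fp, Fintype.sum_sum_type, Fintype.sum_sum_type, Fintype.sum_prod_type]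
  simp only [deg_ll, deg_lr, deg_r]
  simp only [Finset.sum_const, Finset.card_univ, Fintype.card_fin, nsmul_eq_mul]
  simp only [Fintype.card_sum, Fintype.card_prod, Fintype.card_fin]
  push_cast
  ring

lemma fp_V1 (D d : ℕ) (p : ℝ) :
    fp (bipCliqueGraph D d) p (V1 D d) =
      ((D : ℝ) * (d:ℝ)^p + (d : ℝ) * (D:ℝ)^p) / ((D:ℝ) + (d:ℝ)) := by
  rw [fp]
  have hs : ∑ v ∈ V1 D d, (↑(indDeg (bipCliqueGraph D d) (V1 D d) v) : ℝ) ^ p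
      = ∑ v ∈ V1 D d, (↑(indDeg (bipCliqueGraph D d) Finset.univ v) : ℝ) ^ p := by
    refine Finset.sum_congr rfl (fun v hv => ?_)
    rcases v with x | x
    · rw [indDeg_V1_eq]
    · simp [V1] at hv
  rw [hs, V1_eq, Finset.sum_map, Finset.card_map]
  simp only [Function.Embedding.coeFn_mk]
  rw [Fintype.sum_sum_type]
  simp only [deg_ll, deg_lr]
  simp only [Finset.sum_const, Finset.card_univ, Fintype.card_fin, nsmul_eq_mul]
  simp only [Fintype.card_sum, Fintype.card_fin]
  push_cast
  ring

lemma fp_nonneg {V : Type*} [DecidableEq V] (G : SimpleGraph V) (p : ℝ) (S : Finset V) :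
    0 ≤ fp G p S := by
  apply mul_nonneg (by positivity)
  exact Finset.sum_nonneg fun v _ => Real.rpow_nonneg (Nat.cast_nonneg _) p

theorem part1 (p : ℝ) (hp : 1 < p) (d : ℕ) (hd : 1 ≤ d) (D : ℕ) (hD : 0 < D) :
    fp (bipCliqueGraph D d) p Finset.univ <
      (d : ℝ) ^ (p - 1) + (D : ℝ) ^ (p - 1) + ((d : ℝ) + 1) ^ p := by
  rw [fp_univ]
  have hd1 : (1:ℝ) ≤ (d:ℝ) := by exact_mod_cast hd
  have hD1 : (1:ℝ) ≤ (D:ℝ) := by exact_mod_cast hD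
  have hd0 : (0:ℝ) < d := by linarith
  have hD0 : (0:ℝ) < D := by linarith
  have hN : (0:ℝ) < (D:ℝ) + d + D*((d:ℝ)+2) := by positivity
  rw [div_lt_iff₀ hN]
  have hdp : (d:ℝ)^p = (d:ℝ)^(p-1) * d := by
    rw [Real.rpow_sub_one hd0.ne', div_mul_cancel₀ _ hd0.ne']
  have hDp : (D:ℝ)^p = (D:ℝ)^(p-1) * D := by
    rw [Real.rpow_sub_one hD0.ne', div_mul_cancel₀ _ hD0.ne']
  rw [hdp, hDp]
  have hX : (0:ℝ) ≤ (d:ℝ)^(p-1) := Real.rpow_nonneg hd0.le _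
  have hY : (0:ℝ) ≤ (D:ℝ)^(p-1) := Real.rpow_nonneg hD0.le _
  have hC : (0:ℝ) < ((d:ℝ)+1)^p := Real.rpow_pos_of_pos (by linarith) p
  nlinarith [mul_nonneg hX (by linarith : (0:ℝ) ≤ 3*(D:ℝ) + d),
    mul_nonneg hY (by linarith : (0:ℝ) ≤ 3*(D:ℝ) + d),
    mul_pos hC (by linarith : (0:ℝ) < (D:ℝ) + d)]

theorem part2aux (p : ℝ) (hp : 1 < p) (d : ℕ) (hd : 1 ≤ d) (D : ℕ)
    (hD : d^2 + d + 1 ≤ D)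
    (hX : ((d:ℝ)+2) * ((d:ℝ)+1)^p ≤ (D:ℝ)^(p-1)) :
    fp (bipCliqueGraph D d) p Finset.univ / fp (bipCliqueGraph D d) p (V1 D d)
      ≤ 1 / (d : ℝ) := by
  rw [fp_univ, fp_V1]
  have hd1 : (1:ℝ) ≤ (d:ℝ) := by exact_mod_cast hd
  have hD1 : (d:ℝ)^2 + d + 1 ≤ (D:ℝ) := by exact_mod_cast hD
  have hd0 : (0:ℝ) < d := by linarith
  have hD0 : (0:ℝ) < D := by nlinarith
  have hDp : (D:ℝ)^p = (D:ℝ)^(p-1) * D := by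
    rw [Real.rpow_sub_one hD0.ne', div_mul_cancel₀ _ hD0.ne']
  set Y := (D:ℝ)^(p-1) with hYdef
  set C := ((d:ℝ)+1)^p with hCdef
  have hC : (0:ℝ) < C := Real.rpow_pos_of_pos (by linarith) p
  have hdp : (0:ℝ) ≤ (d:ℝ)^p := Real.rpow_nonneg hd0.le _
  have hY0 : (0:ℝ) < Y := Real.rpow_pos_of_pos hD0 _
  have hA : (0:ℝ) < (D:ℝ) * (d:ℝ)^p + d * (D:ℝ)^p := by
    have : (0:ℝ) < (D:ℝ)^p := Real.rpow_pos_of_pos hD0 p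
    positivity
  have hDd : (0:ℝ) < (D:ℝ) + d := by linarith
  have hN : (0:ℝ) < (D:ℝ) + d + D*((d:ℝ)+2) := by positivity
  rw [div_le_div_iff₀ (div_pos hA hDd) hd0, div_mul_eq_mul_div, one_mul,
    div_le_div_iff₀ hN hDd]
  rw [hDp]
  -- key polynomial inequality
  nlinarith [mul_le_mul_of_nonneg_right hX (by positivity : (0:ℝ) ≤ 2*(d:ℝ)*(D:ℝ)^2),
    mul_nonneg (mul_nonneg hdp hD0.le) (by nlinarith : (0:ℝ) ≤ 3*(D:ℝ) + d - d^2),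
    mul_nonneg (mul_nonneg (mul_nonneg hd0.le hY0.le) hD0.le)
      (by nlinarith : (0:ℝ) ≤ (D:ℝ) - d^2 + d),
    mul_nonneg (mul_nonneg (mul_nonneg (mul_nonneg hd0.le (by linarith : (0:ℝ) ≤ (d:ℝ)+2)) hC.le) hD0.le)
      (by nlinarith : (0:ℝ) ≤ (D:ℝ) - d)]


theorem simplePeel_whole_graph_bound (p : ℝ) (hp : 1 < p)
    (d : ℕ) (hd : 1 ≤ d) :
    (∀ D : ℕ, 0 < D →
      fp (bipCliqueGraph D d) p Finset.univ <
        (d : ℝ) ^ (p - 1) + (D : ℝ) ^ (p - 1) + ((d : ℝ) + 1) ^ p) ∧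
    Filter.limsup (fun D : ℕ =>
        fp (bipCliqueGraph D d) p Finset.univ /
          fp (bipCliqueGraph D d) p (V1 D d)) atTop ≤ 1 / (d : ℝ) := by
  constructor
  · exact fun D hD => part1 p hp d hd D hD
  · have hev : ∀ᶠ D : ℕ in atTop,
        fp (bipCliqueGraph D d) p Finset.univ / fp (bipCliqueGraph D d) p (V1 D d)
          ≤ 1 / (d : ℝ) := by
      have h1 : ∀ᶠ D : ℕ in atTop, d ^ 2 + d + 1 ≤ D := eventually_ge_atTop _
      have h2 : ∀ᶠ D : ℕ in atTop, ((d:ℝ)+2) * ((d:ℝ)+1) ^ p ≤ (D:ℝ) ^ (p-1) :=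
        ((tendsto_rpow_atTop (by linarith : (0:ℝ) < p - 1)).comp
          tendsto_natCast_atTop_atTop).eventually_ge_atTop _
      filter_upwards [h1, h2] with D hD hX using part2aux p hp d hd D hD hX
    refine Filter.limsup_le_of_le ?_ hev
    refine Filter.IsBoundedUnder.isCoboundedUnder_le (isBoundedUnder_of ⟨0, fun D => ?_⟩)
    exact div_nonneg (fp_nonneg _ _ _) (fp_nonneg _ _ _)
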